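/- Let k > 0, φ > 0, set c0 = k·coth(φ), and let c > 0 satisfy (c − c0)² > k². Set β = 2ck/((c − c0)² − k²), and fix t, ξ0, η0 ∈ ℝ. Define the entire function F(z) = β(1 − e^{i k (z − c0 t − ξ0) + φ}) − (1 + i c (z − c t − η0))(1 + e^{i k (z − c0 t − ξ0) + φ}) of the complex variable z. Then F(z) ≠ 0 for every z ∈ ℂ with Im(z) ≤ 0; i.e., all zeros of the breather tau function f lie strictly in the upper half-plane. -/

import Mathlib

/-- all zeros of the breather tau function lie strictly in the
upper half plane: its analytic continuation `F` in `x`, at fixed time `t`,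
does not vanish on the closed lower half-plane. -/
theorem breather_tau_zero_free_lower_half_plane
    (k φ ξ0 η0 c0 c β t : ℝ) (hk : 0 < k) (hφ : 0 < φ)
    (hc0 : c0 = k * Real.cosh φ / Real.sinh φ)
    (hc : 0 < c) (hcon : (c - c0) ^ 2 > k ^ 2)
    (hβ : β = 2 * c * k / ((c - c0) ^ 2 - k ^ 2))
    (F : ℂ → ℂ)
    (hF : ∀ z : ℂ, F z =
      β * (1 - Complex.exp (Complex.I * (k * (z - c0 * t - ξ0)) + φ))
        - (1 + Complex.I * (c * (z - c * t - η0)))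
            * (1 + Complex.exp (Complex.I * (k * (z - c0 * t - ξ0)) + φ))) :
    ∀ z : ℂ, z.im ≤ 0 → F z ≠ 0 := by
  intro z hz hzero
  rw [hF z] at hzero
  set E := Complex.exp (Complex.I * (↑k * (z - ↑c0 * ↑t - ↑ξ0)) + ↑φ) with hE
  have habs : 1 < ‖E‖ := by
    rw [hE, Complex.norm_exp]
    have h1 : (Complex.I * (↑k * (z - ↑c0 * ↑t - ↑ξ0)) + (↑φ : ℂ)).re
        = -(k * z.im) + φ := by
      simp [Complex.add_re, Complex.mul_re, Complex.mul_im]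
    rw [h1]
    have h2 : (0:ℝ) < -(k * z.im) + φ := by nlinarith
    calc (1:ℝ) = Real.exp 0 := by simp
    _ < _ := Real.exp_lt_exp.mpr h2
  have hsq : 1 < E.re ^ 2 + E.im ^ 2 := by
    have h2 : 1 < ‖E‖ ^ 2 := by nlinarith [norm_nonneg E]
    rw [Complex.sq_norm, Complex.normSq_apply] at h2
    nlinarith
  have hβpos : 0 < β := by
    rw [hβ]
    apply div_pos (by positivity)
    nlinarith
  obtain ⟨hre, him⟩ := Complex.ext_iff.mp hzero
  simp [Complex.mul_re, Complex.mul_im] at hre him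
  have hr : (1:ℝ) ≤ 1 - c * z.im := by nlinarith
  have key : β * (1 - (E.re ^ 2 + E.im ^ 2)) = (1 - c * z.im) * ((1 + E.re) ^ 2 + E.im ^ 2) := by
    linear_combination (1 + E.re) * hre + E.im * him
  nlinarith [key, hsq, hβpos, hr, sq_nonneg (1 + E.re), sq_nonneg E.im]
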